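/- Let d ≥ 2 be an integer. For z = r e^{iθ} with r > 0 and θ ∈ [0, 2π), define ρ(z) = r^{d/2} |sin(dθ/2)| and let Γ = ⋃_{k=0}^{d−1} {λ e^{2πik/d} : 0 ≤ λ ≤ λ_0} for some λ_0 > 0. Then ρ(z) ≥ (d/π)^{d/2} · d(z, Γ)^{d/2} for all z with |z| ≤ λ_0. -/

import Mathlib

open Real Complex in
/-- |e^{ia} - e^{ib}| ≤ |a - b| for real a, b. -/
lemma exp_I_lipschitz (a b : ℝ) :
    ‖Complex.exp (a * Complex.I) - Complex.exp (b * Complex.I)‖ ≤ |a - b| := by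
  have h1 : Complex.exp (a * Complex.I) - Complex.exp (b * Complex.I)
      = Complex.exp (b * Complex.I) * (Complex.exp (((a - b : ℝ) : ℂ) * Complex.I) - 1) := by
    rw [mul_sub, mul_one, ← Complex.exp_add]
    push_cast
    ring_nf
  set δ : ℝ := a - b with hδ
  clear_value δ
  have h2 : Complex.exp ((δ : ℂ) * Complex.I) - 1
      = ((Real.cos δ - 1 : ℝ) : ℂ) + ((Real.sin δ : ℝ) : ℂ) * Complex.I := by
    rw [Complex.exp_mul_I]
    push_cast [Complex.ofReal_cos, Complex.ofReal_sin]
    ring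
  rw [h1, norm_mul, Complex.norm_exp_ofReal_mul_I, one_mul, h2]
  have h3 : ‖((Real.cos δ - 1 : ℝ) : ℂ) + ((Real.sin δ : ℝ) : ℂ) * Complex.I‖
      = Real.sqrt ((Real.cos δ - 1) ^ 2 + Real.sin δ ^ 2) := by
    rw [Complex.norm_def, Complex.normSq_add_mul_I]
  rw [h3]
  have hsinsq : Real.sin (δ / 2) ^ 2 ≤ (δ / 2) ^ 2 := Real.sin_sq_le_sq
  have hcos2 : Real.cos (2 * (δ / 2)) = 2 * Real.cos (δ / 2) ^ 2 - 1 := Real.cos_two_mul _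
  have hδ2 : 2 * (δ / 2) = δ := by ring
  rw [hδ2] at hcos2
  have hpyth2 : Real.sin (δ / 2) ^ 2 + Real.cos (δ / 2) ^ 2 = 1 := Real.sin_sq_add_cos_sq _
  have hhalf : Real.sin (δ / 2) ^ 2 = 1 / 2 - Real.cos δ / 2 := by linarith
  have hid : (Real.cos δ - 1) ^ 2 + Real.sin δ ^ 2 ≤ δ ^ 2 := by
    have hpyth : Real.sin δ ^ 2 + Real.cos δ ^ 2 = 1 := Real.sin_sq_add_cos_sq δ
    have e1 : (Real.cos δ - 1) ^ 2 + Real.sin δ ^ 2 = 2 - 2 * Real.cos δ := by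
      linear_combination hpyth
    have e2 : (δ / 2) ^ 2 = δ ^ 2 / 4 := by ring
    linarith [hsinsq, hhalf, e1, e2]
  calc Real.sqrt ((Real.cos δ - 1) ^ 2 + Real.sin δ ^ 2)
      ≤ Real.sqrt (δ ^ 2) := Real.sqrt_le_sqrt hid
    _ = |δ| := Real.sqrt_sq_eq_abs δ

open Real Complex in
theorem stmt13 (d : ℕ) (hd : 2 ≤ d) (lam0 : ℝ) (hlam0 : 0 < lam0)
    (Γ : Set ℂ)
    (hΓ : Γ = ⋃ k ∈ Finset.range d,
      {w : ℂ | ∃ lam : ℝ, 0 ≤ lam ∧ lam ≤ lam0 ∧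
        w = (lam : ℂ) * Complex.exp (2 * π * Complex.I * k / d)}) :
    ∀ r θ : ℝ, 0 ≤ r → r ≤ lam0 →
      ((d : ℝ) / π) ^ ((d : ℝ) / 2) *
          (Metric.infDist ((r : ℂ) * Complex.exp (Complex.I * θ)) Γ) ^ ((d : ℝ) / 2) ≤
        r ^ ((d : ℝ) / 2) * |Real.sin (d * θ / 2)| := by
  intro r θ hr hrl
  have hdpos : (0 : ℝ) < d := by positivity
  have hdne : (d : ℝ) ≠ 0 := hdpos.ne'
  have hpi : (0 : ℝ) < π := Real.pi_pos
  -- nearest ray index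
  set k' : ℤ := round ((d : ℝ) * θ / (2 * π)) with hk'
  set δ : ℝ := θ - 2 * π * k' / d with hδdef
  have hδ : |δ| ≤ π / d := by
    have h0 : |(d : ℝ) * θ / (2 * π) - k'| ≤ 1 / 2 := abs_sub_round _
    have h1 : δ = (2 * π / d) * ((d : ℝ) * θ / (2 * π) - k') := by
      field_simp [hδdef]
      rw [hδdef]; field_simp
    rw [h1, abs_mul, abs_of_pos (by positivity : (0:ℝ) < 2 * π / d)]
    calc 2 * π / d * |(d : ℝ) * θ / (2 * π) - k'| ≤ 2 * π / d * (1 / 2) := by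
          exact mul_le_mul_of_nonneg_left h0 (by positivity)
      _ = π / d := by ring
  -- the point on Γ
  have hdZ : (0 : ℤ) < (d : ℤ) := by exact_mod_cast (by omega : 0 < d)
  have h1 : k' % (d : ℤ) < d := Int.emod_lt_of_pos k' hdZ
  have h2 : 0 ≤ k' % (d : ℤ) := Int.emod_nonneg k' hdZ.ne'
  obtain ⟨k, hknat⟩ : ∃ k : ℕ, (k : ℤ) = k' % d := ⟨(k' % d).toNat, Int.toNat_of_nonneg h2⟩
  have hkd : k < d := by
    have : (k : ℤ) < (d : ℤ) := hknat ▸ h1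
    exact_mod_cast this
  set φ : ℝ := 2 * π * k' / d with hφ
  have hexpeq : Complex.exp (2 * ↑π * Complex.I * (k : ℂ) / (d : ℂ)) = Complex.exp ((φ : ℂ) * Complex.I) := by
    obtain ⟨q, hq⟩ : ∃ q : ℤ, k' = d * q + k := ⟨k' / d, by linarith [Int.mul_ediv_add_emod k' (d : ℤ)]⟩
    have : ((φ : ℝ) : ℂ) * Complex.I = 2 * ↑π * Complex.I * (k : ℂ) / (d : ℂ) + (q : ℂ) * (2 * ↑π * Complex.I) := by
      have hdC : (d : ℂ) ≠ 0 := by exact_mod_cast hdne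
      have hk'C : ((k' : ℝ) : ℂ) = (d : ℂ) * q + k := by exact_mod_cast congrArg (Int.cast : ℤ → ℂ) hq
      field_simp [hφ]
      push_cast
      push_cast at hk'C
      rw [hφ]; push_cast; rw [hk'C, div_mul_cancel₀ _ hdC]; ring
    rw [this, Complex.exp_add, Complex.exp_int_mul_two_pi_mul_I, mul_one]
  set w : ℂ := (r : ℂ) * Complex.exp ((φ : ℂ) * Complex.I) with hw
  have hwΓ : w ∈ Γ := by
    rw [hΓ]
    simp only [Set.mem_iUnion, Finset.mem_range, Set.mem_setOf_eq]
    exact ⟨k, hkd, r, hr, hrl, by rw [hw, hexpeq]⟩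
  -- distance bound
  set z : ℂ := (r : ℂ) * Complex.exp (Complex.I * θ) with hz
  have hdist : Metric.infDist z Γ ≤ r * |δ| := by
    calc Metric.infDist z Γ ≤ dist z w := Metric.infDist_le_dist_of_mem hwΓ
      _ = ‖(r : ℂ) * (Complex.exp ((θ : ℂ) * Complex.I) - Complex.exp ((φ : ℂ) * Complex.I))‖ := by
          rw [Complex.dist_eq, hz, hw, mul_comm Complex.I (θ : ℂ), ← mul_sub]
      _ = r * ‖Complex.exp ((θ : ℂ) * Complex.I) - Complex.exp ((φ : ℂ) * Complex.I)‖ := by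
          rw [norm_mul, Complex.norm_real, Real.norm_eq_abs, _root_.abs_of_nonneg hr]
      _ ≤ r * |θ - φ| := mul_le_mul_of_nonneg_left (exp_I_lipschitz θ φ) hr
      _ = r * |δ| := by rw [hδdef, hφ]
  -- sine identity
  have hsin : |Real.sin ((d : ℝ) * θ / 2)| = |Real.sin ((d : ℝ) * δ / 2)| := by
    have h1 : (d : ℝ) * θ / 2 = (d : ℝ) * δ / 2 + (k' : ℤ) * π := by
      rw [hδdef, hφ]; field_simp; ring
    rw [h1, Real.sin_add_int_mul_pi]
    rcases Int.even_or_odd k' with he | ho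
    · rw [he.neg_one_zpow, one_mul]
    · rw [ho.neg_one_zpow, neg_one_mul, abs_neg]
  -- Jordan's inequality
  have hjordan : (d : ℝ) / π * |δ| ≤ |Real.sin ((d : ℝ) * θ / 2)| := by
    rw [hsin]
    have h1 : |(d : ℝ) * δ / 2| ≤ π / 2 := by
      rw [abs_div, abs_mul, abs_of_pos hdpos, _root_.abs_two]
      have : (d : ℝ) * |δ| ≤ π := by
        calc (d : ℝ) * |δ| ≤ (d : ℝ) * (π / d) := mul_le_mul_of_nonneg_left hδ hdpos.le
          _ = π := by field_simp
      linarith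
    have h2 := Real.mul_abs_le_abs_sin h1
    calc (d : ℝ) / π * |δ| = 2 / π * |(d : ℝ) * δ / 2| := by
          rw [abs_div, abs_mul, abs_of_pos hdpos, _root_.abs_two]; field_simp
      _ ≤ |Real.sin ((d : ℝ) * δ / 2)| := h2
  -- set x := (d/π)|δ| ∈ [0,1]
  set x : ℝ := (d : ℝ) / π * |δ| with hx
  have hxnn : 0 ≤ x := by positivity
  have hx1 : x ≤ 1 := by
    rw [hx]
    calc (d : ℝ) / π * |δ| ≤ (d : ℝ) / π * (π / d) := by
          exact mul_le_mul_of_nonneg_left hδ (by positivity)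
      _ = 1 := by field_simp
  have hexp1 : (1 : ℝ) ≤ (d : ℝ) / 2 := by
    have : (2 : ℝ) ≤ d := by exact_mod_cast hd
    linarith
  have hxpow : x ^ ((d : ℝ) / 2) ≤ x := by
    rcases eq_or_lt_of_le hxnn with h | h
    · rw [← h, Real.zero_rpow (by positivity)]
    · calc x ^ ((d : ℝ) / 2) ≤ x ^ (1 : ℝ) :=
            Real.rpow_le_rpow_of_exponent_ge h hx1 hexp1
        _ = x := Real.rpow_one x
  have hinfnn : 0 ≤ Metric.infDist z Γ := Metric.infDist_nonneg
  calc ((d : ℝ) / π) ^ ((d : ℝ) / 2) * (Metric.infDist z Γ) ^ ((d : ℝ) / 2)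
      = ((d : ℝ) / π * Metric.infDist z Γ) ^ ((d : ℝ) / 2) := by
        rw [← Real.mul_rpow (by positivity) hinfnn]
    _ ≤ ((d : ℝ) / π * (r * |δ|)) ^ ((d : ℝ) / 2) := by
        apply Real.rpow_le_rpow (by positivity) _ (by positivity)
        exact mul_le_mul_of_nonneg_left hdist (by positivity)
    _ = (r * x) ^ ((d : ℝ) / 2) := by rw [hx]; ring_nf
    _ = r ^ ((d : ℝ) / 2) * x ^ ((d : ℝ) / 2) := Real.mul_rpow hr hxnn
    _ ≤ r ^ ((d : ℝ) / 2) * |Real.sin ((d : ℝ) * θ / 2)| := by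
        apply mul_le_mul_of_nonneg_left _ (Real.rpow_nonneg hr _)
        exact hxpow.trans hjordan
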